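/- arXiv:1110.4936 — 2 statements merged into one kernel-verified Lean document; each statement's English description precedes it below -/
import Mathlib

section
/- The theta function vanishes at odd characteristics: if n, m ∈ ℤ^g satisfy nᵀ·m = Σ_i n_i m_i ∈ 2ℤ + 1 (odd), and c = (n + τm)/2 ∈ ℂ^g (where (τm)_i = Σ_j τ_{ij} m_j), then θ(c | τ) = 0. -/
open Complex Matrix

/-- The general term of the Riemann theta series. -/
noncomputable def riemannThetaTerm {g : ℕ} (τ : Matrix (Fin g) (Fin g) ℂ)
    (u : Fin g → ℂ) (n : Fin g → ℤ) : ℂ :=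
  Complex.exp (2 * (Real.pi : ℂ) * Complex.I * (∑ i, (n i : ℂ) * u i)
    + (Real.pi : ℂ) * Complex.I * (∑ i, ∑ j, (n i : ℂ) * τ i j * (n j : ℂ)))

/-- The Riemann theta function `θ(u|τ) = Σ_{n ∈ ℤ^g} exp(2πi n·u + πi nᵀτn)`. -/
noncomputable def riemannTheta {g : ℕ} (τ : Matrix (Fin g) (Fin g) ℂ)
    (u : Fin g → ℂ) : ℂ :=
  ∑' n : Fin g → ℤ, riemannThetaTerm τ u n

lemma riemannThetaTerm_involution (g : ℕ)
    (τ : Matrix (Fin g) (Fin g) ℂ) (hsym : τ.IsSymm)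
    (n m : Fin g → ℤ) (hodd : Odd (∑ i, n i * m i))
    (c : Fin g → ℂ)
    (hc : ∀ i, c i = ((n i : ℂ) + ∑ j, τ i j * (m j : ℂ)) / 2)
    (k : Fin g → ℤ) :
    riemannThetaTerm τ c (fun i => -k i - m i) = - riemannThetaTerm τ c k := by
  have main : riemannThetaTerm τ c (fun i => -k i - m i)
      = Complex.exp ((Real.pi:ℂ) * Complex.I *
          (((-2 * ∑ i, k i * n i - ∑ i, n i * m i : ℤ) : ℂ)))
        * riemannThetaTerm τ c k := by
    unfold riemannThetaTerm
    rw [← Complex.exp_add]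
    congr 1
    push_cast
    have hswap : ∑ i, ∑ j, (m i:ℂ) * τ i j * (k j:ℂ)
        = ∑ i, ∑ j, (k i:ℂ) * τ i j * (m j:ℂ) := by
      rw [Finset.sum_comm]
      refine Finset.sum_congr rfl fun i _ => Finset.sum_congr rfl fun j _ => ?_
      rw [hsym.apply i j]; ring
    have e1 : ∑ x, (-(k x:ℂ) - (m x:ℂ)) * c x
        = -(∑ i, (k i:ℂ) * c i) - ∑ i, (m i:ℂ) * c i := by
      simp only [sub_mul, neg_mul, Finset.sum_sub_distrib, Finset.sum_neg_distrib]
    have e4 : ∑ x, ∑ y, (-(k x:ℂ) - (m x:ℂ)) * τ x y * (-(k y:ℂ) - (m y:ℂ))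
        = ((∑ i, ∑ j, (k i:ℂ) * τ i j * (k j:ℂ)) + ∑ i, ∑ j, (k i:ℂ) * τ i j * (m j:ℂ))
          + ((∑ i, ∑ j, (m i:ℂ) * τ i j * (k j:ℂ)) + ∑ i, ∑ j, (m i:ℂ) * τ i j * (m j:ℂ)) := by
      have h : ∀ x y : Fin g, (-(k x:ℂ) - (m x:ℂ)) * τ x y * (-(k y:ℂ) - (m y:ℂ))
          = ((k x:ℂ) * τ x y * (k y:ℂ) + (k x:ℂ) * τ x y * (m y:ℂ))
            + ((m x:ℂ) * τ x y * (k y:ℂ) + (m x:ℂ) * τ x y * (m y:ℂ)) := fun x y => by ring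
      simp only [h, Finset.sum_add_distrib]
    have e2 : 2 * ∑ i, (k i:ℂ) * c i
        = (∑ i, (k i:ℂ) * (n i:ℂ)) + ∑ i, ∑ j, (k i:ℂ) * τ i j * (m j:ℂ) := by
      rw [Finset.mul_sum, ← Finset.sum_add_distrib]
      refine Finset.sum_congr rfl fun i _ => ?_
      rw [hc i, show ∑ j, (k i:ℂ) * τ i j * (m j:ℂ) = (k i:ℂ) * ∑ j, τ i j * (m j:ℂ) by
        rw [Finset.mul_sum]; exact Finset.sum_congr rfl fun j _ => mul_assoc _ _ _]
      ring
    have e3 : 2 * ∑ i, (m i:ℂ) * c i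
        = (∑ i, (n i:ℂ) * (m i:ℂ)) + ∑ i, ∑ j, (m i:ℂ) * τ i j * (m j:ℂ) := by
      rw [Finset.mul_sum, ← Finset.sum_add_distrib]
      refine Finset.sum_congr rfl fun i _ => ?_
      rw [hc i, show ∑ j, (m i:ℂ) * τ i j * (m j:ℂ) = (m i:ℂ) * ∑ j, τ i j * (m j:ℂ) by
        rw [Finset.mul_sum]; exact Finset.sum_congr rfl fun j _ => mul_assoc _ _ _]
      ring
    rw [e1, e4]
    linear_combination (-2*(Real.pi:ℂ)*Complex.I) * e2 - ((Real.pi:ℂ)*Complex.I) * e3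
      + ((Real.pi:ℂ)*Complex.I) * hswap
  rw [main]
  have hz : Odd (-2 * ∑ i, k i * n i - ∑ i, n i * m i) :=
    Even.sub_odd ⟨-∑ i, k i * n i, by ring⟩ hodd
  rw [mul_comm ((Real.pi:ℂ) * Complex.I), Complex.exp_int_mul, Complex.exp_pi_mul_I,
    hz.neg_one_zpow, neg_one_mul]

/-- The theta function vanishes at odd characteristics: if `n, m ∈ ℤ^g` have
`nᵀ·m` odd and `c = (n + τm)/2`, then `θ(c | τ) = 0`. -/
theorem riemannTheta_vanishes_at_odd_characteristics (g : ℕ) (hg : 1 ≤ g)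
    (τ : Matrix (Fin g) (Fin g) ℂ) (hsym : τ.IsSymm)
    (hpos : (Matrix.of fun i j => (τ i j).im).PosDef)
    (n m : Fin g → ℤ) (hodd : Odd (∑ i, n i * m i))
    (c : Fin g → ℂ)
    (hc : ∀ i, c i = ((n i : ℂ) + ∑ j, τ i j * (m j : ℂ)) / 2) :
    riemannTheta τ c = 0 := by
  have hinv : Function.Involutive (fun k : Fin g → ℤ => fun i => -k i - m i) := by
    intro k; funext i; simp only; ring
  have hself : riemannTheta τ c = - riemannTheta τ c := by
    calc riemannTheta τ c
        = ∑' k : Fin g → ℤ, riemannThetaTerm τ c (fun i => -k i - m i) :=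
          (Equiv.tsum_eq hinv.toPerm (riemannThetaTerm τ c)).symm
      _ = ∑' k : Fin g → ℤ, - riemannThetaTerm τ c k := by
          simp only [riemannThetaTerm_involution g τ hsym n m hodd c hc]
      _ = - riemannTheta τ c := by rw [riemannTheta, tsum_neg]
  have := congrArg (· + riemannTheta τ c) hself
  simp only [neg_add_cancel] at this
  simpa [two_mul, add_self_eq_zero] using this
end

section
/- Heat equation for the Riemann theta function: for every symmetric g×g complex matrix A and every u ∈ ℂ^g, the function s ↦ θ(u | τ + sA) of the real variable s is differentiable at s = 0 (note that Im(τ + sA) remains positive definite for |s| small), and its derivative at s = 0 equals (1/(4πi)) Σ_{i,j=1}^g A_{ij} · (∂²θ/∂u_i∂u_j)(u | τ). (This is the directional form of the identity ∂_{τ_{ij}}θ = (1/4iπ) ∂_{u_i}∂_{u_j}θ, where τ_{ij} and τ_{ji} are considered independent.) -/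
open Complex Matrix

/-- Partial derivative `∂f/∂u_i` of a function `f : ℂ^g → ℂ` at a point `u`. -/
noncomputable def pderivAlong {g : ℕ} (f : (Fin g → ℂ) → ℂ) (i : Fin g)
    (u : Fin g → ℂ) : ℂ :=
  deriv (fun t : ℂ => f (u + t • (Pi.single i 1 : Fin g → ℂ))) 0

lemma summable_exp_int (a b : ℝ) (hb : 0 < b) :
    Summable (fun m : ℤ => Real.exp (a * |(m : ℝ)| - b * (m : ℝ)^2)) := by
  have key : ∀ m : ℤ, Real.exp (a * |(m:ℝ)| - b * (m:ℝ)^2)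
      ≤ Real.exp ((a+1)^2/(4*b)) * Real.exp (-|(m:ℝ)|) := by
    intro m
    rw [← Real.exp_add]
    apply Real.exp_le_exp.mpr
    have h4b : (0:ℝ) < 4*b := by linarith
    rw [← _root_.sq_abs (m:ℝ), ← sub_le_iff_le_add, le_div_iff₀ h4b]
    nlinarith [sq_nonneg (2*b*|(m:ℝ)| - (a+1))]
  apply Summable.of_nonneg_of_le (fun m => (Real.exp_pos _).le) key
  apply Summable.mul_left
  have hnat : Summable (fun n : ℕ => Real.exp (-(n:ℝ))) := by
    simpa [Real.exp_neg, Real.exp_nat_mul, inv_pow] using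
      summable_geometric_of_lt_one (by positivity) (by
        rw [inv_lt_one_iff₀]; right
        exact Real.one_lt_exp_iff.mpr one_pos : (Real.exp 1)⁻¹ < 1)
  apply Summable.of_nat_of_neg <;> simp_all

lemma summable_pi_prod {g : ℕ} (f : ℤ → ℝ) (hf0 : ∀ m, 0 ≤ f m) (hf : Summable f) :
    Summable (fun n : Fin g → ℤ => ∏ i, f (n i)) := by
  induction g with
  | zero => exact .of_finite
  | succ k ih =>
    have h := (hf.mul_of_nonneg ih (fun m => hf0 m)
      (fun n => Finset.prod_nonneg fun i _ => hf0 _))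
    rw [← (Fin.consEquiv (fun _ : Fin (k+1) => ℤ)).summable_iff]
    apply h.congr
    intro p
    simp [Fin.consEquiv, Fin.prod_univ_succ]

lemma summable_master (g : ℕ) (a b : ℝ) (hb : 0 < b) :
    Summable (fun n : Fin g → ℤ =>
      Real.exp (∑ i, (a * |(n i : ℝ)| - b * (n i : ℝ)^2))) := by
  have := summable_pi_prod (g := g) (fun m : ℤ => Real.exp (a * |(m:ℝ)| - b * (m:ℝ)^2))
    (fun m => (Real.exp_pos _).le) (summable_exp_int a b hb)
  apply this.congr
  intro n
  rw [Real.exp_sum]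



lemma norm_riemannThetaTerm {g : ℕ} (τ : Matrix (Fin g) (Fin g) ℂ)
    (u : Fin g → ℂ) (n : Fin g → ℤ) :
    ‖riemannThetaTerm τ u n‖ = Real.exp (-(2*Real.pi) * ∑ i, (n i : ℝ) * (u i).im
      - Real.pi * ∑ i, ∑ j, (n i : ℝ) * (τ i j).im * (n j : ℝ)) := by
  rw [riemannThetaTerm, Complex.norm_exp]
  congr 1
  have h1 : (∑ i, (n i : ℂ) * u i).im = ∑ i, (n i : ℝ) * (u i).im := by
    rw [Complex.im_sum]
    exact Finset.sum_congr rfl fun i _ => by simp [Complex.mul_im]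
  have h2 : (∑ i, ∑ j, (n i : ℂ) * τ i j * (n j : ℂ)).im
      = ∑ i, ∑ j, (n i : ℝ) * (τ i j).im * (n j : ℝ) := by
    rw [Complex.im_sum]
    refine Finset.sum_congr rfl fun i _ => ?_
    rw [Complex.im_sum]
    exact Finset.sum_congr rfl fun j _ => by simp [Complex.mul_im, Complex.mul_re]
  simp [Complex.add_re, Complex.mul_re, Complex.mul_im, h1, h2]
  ring

lemma norm_riemannThetaTerm_le {g : ℕ} (τ' : Matrix (Fin g) (Fin g) ℂ)
    (u' : Fin g → ℂ) (n : Fin g → ℤ) (c' M : ℝ)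
    (hq : c' * ∑ i, (n i : ℝ)^2 ≤ ∑ i, ∑ j, (n i : ℝ) * (τ' i j).im * (n j : ℝ))
    (hM : ∀ i, |(u' i).im| ≤ M) :
    ‖riemannThetaTerm τ' u' n‖
      ≤ Real.exp (∑ i, (2*Real.pi*M * |(n i : ℝ)| - Real.pi*c' * (n i : ℝ)^2)) := by
  rw [norm_riemannThetaTerm]
  apply Real.exp_le_exp.mpr
  have hsplit : ∑ i, (2*Real.pi*M*|(n i:ℝ)| - Real.pi*c'*(n i:ℝ)^2)
      = (∑ i, 2*Real.pi*M*|(n i:ℝ)|) - Real.pi*c' * ∑ i, (n i:ℝ)^2 := by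
    rw [Finset.sum_sub_distrib, Finset.mul_sum]
  rw [hsplit]
  have h1 : -(2*Real.pi) * ∑ i, (n i:ℝ) * (u' i).im ≤ ∑ i, 2*Real.pi*M*|(n i:ℝ)| := by
    rw [Finset.mul_sum]
    apply Finset.sum_le_sum
    intro i _
    have e1 : -((n i:ℝ) * (u' i).im) ≤ |(n i:ℝ)| * M := by
      calc -((n i:ℝ)*(u' i).im) ≤ |(n i:ℝ) * (u' i).im| := neg_le_abs _
        _ = |(n i:ℝ)| * |(u' i).im| := abs_mul _ _
        _ ≤ |(n i:ℝ)| * M := mul_le_mul_of_nonneg_left (hM i) (abs_nonneg _)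
    nlinarith [Real.pi_pos, e1]
  have h2 : Real.pi * (c' * ∑ i, (n i:ℝ)^2) ≤ Real.pi * ∑ i, ∑ j, (n i:ℝ) * (τ' i j).im * (n j:ℝ) :=
    mul_le_mul_of_nonneg_left hq Real.pi_pos.le
  have h3 := neg_le_neg h2
  linarith

lemma posdef_quad_bound {g : ℕ} (hg : 1 ≤ g) (M : Matrix (Fin g) (Fin g) ℝ)
    (hM : M.PosDef) :
    ∃ c > 0, ∀ x : Fin g → ℝ, c * ∑ i, (x i)^2 ≤ ∑ i, ∑ j, x i * M i j * x j := by
  classical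
  set Q : (Fin g → ℝ) → ℝ := fun x => ∑ i, ∑ j, x i * M i j * x j with hQ
  have hQdot : ∀ x : Fin g → ℝ, Q x = x ⬝ᵥ M *ᵥ x := by
    intro x
    simp only [hQ, dotProduct, mulVec, dotProduct, Finset.mul_sum]
    exact Finset.sum_congr rfl fun i _ => Finset.sum_congr rfl fun j _ => by ring
  have hQpos : ∀ x : Fin g → ℝ, x ≠ 0 → 0 < Q x := by
    intro x hx
    rw [hQdot]
    simpa using hM.dotProduct_mulVec_pos hx
  have hQcont : Continuous Q := by
    apply continuous_finset_sum
    intro i _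
    apply continuous_finset_sum
    intro j _
    exact ((continuous_apply i).mul continuous_const).mul (continuous_apply j)
  set N : (Fin g → ℝ) → ℝ := fun x => ∑ i, (x i)^2 with hN
  have hNcont : Continuous N :=
    continuous_finset_sum _ fun i _ => (continuous_apply i).pow 2
  set S : Set (Fin g → ℝ) := N ⁻¹' {1} with hS
  have hSclosed : IsClosed S := isClosed_singleton.preimage hNcont
  have hSbdd : Bornology.IsBounded S := by
    apply (Metric.isBounded_iff_subset_closedBall 0).mpr
    refine ⟨1, fun x hx => ?_⟩
    simp only [Metric.mem_closedBall, dist_zero_right]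
    rw [pi_norm_le_iff_of_nonneg zero_le_one]
    intro i
    have h1 : (x i)^2 ≤ 1 := by
      have hx1 : N x = 1 := hx
      rw [hN] at hx1
      calc (x i)^2 ≤ ∑ j, (x j)^2 :=
        Finset.single_le_sum (fun j _ => sq_nonneg (x j)) (Finset.mem_univ i)
      _ = 1 := hx1
    rw [Real.norm_eq_abs]
    nlinarith [abs_nonneg (x i), _root_.sq_abs (x i)]
  have hScompact : IsCompact S := Metric.isCompact_iff_isClosed_bounded.mpr ⟨hSclosed, hSbdd⟩
  have hSne : S.Nonempty := by
    refine ⟨Pi.single ⟨0, hg⟩ 1, ?_⟩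
    simp only [hS, Set.mem_preimage, hN, Set.mem_singleton_iff]
    rw [Finset.sum_eq_single ⟨0, hg⟩]
    · simp
    · intro b _ hb; simp [Pi.single_apply, hb]
    · simp
  obtain ⟨x0, hx0S, hx0min⟩ := hScompact.exists_isMinOn hSne hQcont.continuousOn
  have hx0ne : x0 ≠ 0 := by
    intro h
    have : N x0 = 1 := hx0S
    rw [h] at this
    simp [hN] at this
  refine ⟨Q x0, hQpos x0 hx0ne, fun x => ?_⟩
  rcases eq_or_ne x 0 with rfl | hx
  · simp [hN, hQ]
  · have hNx : 0 < N x := by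
      rcases Function.ne_iff.mp hx with ⟨i, hi⟩
      have : 0 < (x i)^2 := lt_of_le_of_ne (sq_nonneg _) (Ne.symm (pow_ne_zero 2 hi))
      calc (0:ℝ) < (x i)^2 := this
      _ ≤ N x := Finset.single_le_sum (fun j _ => sq_nonneg (x j)) (Finset.mem_univ i)
    set t : ℝ := Real.sqrt (N x) with ht
    have htpos : 0 < t := Real.sqrt_pos.mpr hNx
    have ht2 : t^2 = N x := Real.sq_sqrt hNx.le
    have hyS : (t⁻¹ • x) ∈ S := by
      simp only [hS, Set.mem_preimage, hN, Set.mem_singleton_iff, Pi.smul_apply, smul_eq_mul]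
      have : ∑ i, (t⁻¹ * x i)^2 = t⁻¹^2 * N x := by
        rw [hN, Finset.mul_sum]; exact Finset.sum_congr rfl fun i _ => by ring
      rw [this, ← ht2]
      field_simp
    have hQy : Q (t⁻¹ • x) = t⁻¹^2 * Q x := by
      simp only [hQ, Pi.smul_apply, smul_eq_mul, Finset.mul_sum]
      exact Finset.sum_congr rfl fun i _ => Finset.sum_congr rfl fun j _ => by ring
    have hmin : Q x0 ≤ Q (t⁻¹ • x) := hx0min hyS
    rw [hQy] at hmin
    have h1 : Q x0 * t^2 ≤ Q x := by
      have ht2pos : 0 < t^2 := by positivity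
      calc Q x0 * t^2 ≤ (t⁻¹^2 * Q x) * t^2 := by
            exact mul_le_mul_of_nonneg_right hmin ht2pos.le
        _ = Q x := by field_simp
    show Q x0 * N x ≤ Q x
    calc Q x0 * N x = Q x0 * t^2 := by rw [ht2]
    _ ≤ Q x := h1

lemma riemannThetaTerm_shift {g : ℕ} (τ : Matrix (Fin g) (Fin g) ℂ)
    (v : Fin g → ℂ) (n : Fin g → ℤ) (j : Fin g) (t : ℂ) :
    riemannThetaTerm τ (v + t • (Pi.single j 1 : Fin g → ℂ)) n
      = Complex.exp (2*(Real.pi:ℂ)*Complex.I*(n j) * t) * riemannThetaTerm τ v n := by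
  rw [riemannThetaTerm, riemannThetaTerm, ← Complex.exp_add]
  congr 1
  have hsum : ∑ i, (n i : ℂ) * (v + t • (Pi.single j 1 : Fin g → ℂ)) i
      = (∑ i, (n i : ℂ) * v i) + (n j : ℂ) * t := by
    simp only [Pi.add_apply, Pi.smul_apply, Pi.single_apply, smul_eq_mul, mul_add,
      Finset.sum_add_distrib]
    congr 1
    rw [Finset.sum_congr rfl (fun i _ => by
      rw [mul_comm]; split <;> ring_nf : ∀ i ∈ Finset.univ,
        (n i : ℂ) * (t * if i = j then 1 else 0) = if i = j then t * (n i : ℂ) else 0)]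
    rw [Finset.sum_ite_eq' Finset.univ j (fun i => t * (n i : ℂ))]
    simp [mul_comm]
  rw [hsum]
  ring

section Key
variable {g : ℕ} (τ : Matrix (Fin g) (Fin g) ℂ) (c : ℝ)

/-- Uniform majorant for `P n * term τ (v + t•e_j) n` for `‖t‖ < 1`. -/
lemma key_bound (hc : 0 < c)
    (hq : ∀ x : Fin g → ℝ, c * ∑ i, (x i)^2 ≤ ∑ i, ∑ j, x i * (τ i j).im * x j)
    (P : (Fin g → ℤ) → ℂ) (C a : ℝ)
    (hP : ∀ n, ‖P n‖ ≤ C * Real.exp (a * ∑ i, |(n i : ℝ)|))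
    (v : Fin g → ℂ) (j : Fin g) (n : Fin g → ℤ) (t : ℂ) (ht : ‖t‖ ≤ 1) :
    ‖P n * riemannThetaTerm τ (v + t • (Pi.single j 1 : Fin g → ℂ)) n‖
      ≤ C * Real.exp (∑ i, ((a + 2*Real.pi*((∑ k, |(v k).im|) + 1)) * |(n i : ℝ)|
          - Real.pi*c * (n i : ℝ)^2)) := by
  set M : ℝ := (∑ k, |(v k).im|) + 1 with hM
  have hbound : ∀ i, |((v + t • (Pi.single j 1 : Fin g → ℂ)) i).im| ≤ M := by
    intro i
    have h1 : ((v + t • (Pi.single j 1 : Fin g → ℂ)) i).im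
        = (v i).im + (t * (if i = j then 1 else 0)).im := by
      simp [Pi.single_apply]
    rw [h1]
    have h2 : |(t * (if i = j then 1 else 0)).im| ≤ 1 := by
      split
      · simpa using (Complex.abs_im_le_norm t).trans ht
      · simp
    have h3 : |(v i).im| ≤ ∑ k, |(v k).im| :=
      Finset.single_le_sum (f := fun k => |(v k).im|) (fun k _ => abs_nonneg _)
        (Finset.mem_univ i)
    calc |(v i).im + (t * (if i = j then 1 else 0)).im|
        ≤ |(v i).im| + |(t * (if i = j then 1 else 0)).im| := abs_add_le _ _
      _ ≤ M := by rw [hM]; linarith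
  have hterm := norm_riemannThetaTerm_le τ (v + t • (Pi.single j 1 : Fin g → ℂ)) n c M
    (hq (fun i => (n i : ℝ))) hbound
  rw [norm_mul]
  calc ‖P n‖ * ‖riemannThetaTerm τ (v + t • (Pi.single j 1 : Fin g → ℂ)) n‖
      ≤ (C * Real.exp (a * ∑ i, |(n i : ℝ)|))
        * Real.exp (∑ i, (2*Real.pi*M * |(n i : ℝ)| - Real.pi*c * (n i : ℝ)^2)) := by
        apply mul_le_mul (hP n) hterm (norm_nonneg _)
        have h0 := (norm_nonneg (P 0)).trans (hP 0)
        have hC : 0 ≤ C := by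
          by_contra h
          push_neg at h
          nlinarith [Real.exp_pos (a * ∑ i : Fin g, |(((0:Fin g → ℤ)) i : ℝ)|)]
        positivity
    _ = C * Real.exp (∑ i, ((a + 2*Real.pi*M) * |(n i : ℝ)| - Real.pi*c * (n i : ℝ)^2)) := by
        rw [mul_assoc, ← Real.exp_add]
        congr 2
        rw [Finset.mul_sum, ← Finset.sum_add_distrib]
        exact Finset.sum_congr rfl fun i _ => by ring

lemma key_hasDerivAt (hc : 0 < c)
    (hq : ∀ x : Fin g → ℝ, c * ∑ i, (x i)^2 ≤ ∑ i, ∑ j, x i * (τ i j).im * x j)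
    (P : (Fin g → ℤ) → ℂ) (C a : ℝ)
    (hP : ∀ n, ‖P n‖ ≤ C * Real.exp (a * ∑ i, |(n i : ℝ)|))
    (v : Fin g → ℂ) (j : Fin g) :
    HasDerivAt (fun t : ℂ => ∑' n : Fin g → ℤ,
        P n * riemannThetaTerm τ (v + t • (Pi.single j 1 : Fin g → ℂ)) n)
      (∑' n : Fin g → ℤ, (2*(Real.pi:ℂ)*Complex.I*(n j) * P n) * riemannThetaTerm τ v n)
      0 := by
  set F : (Fin g → ℤ) → ℂ → ℂ := fun n t =>
    P n * riemannThetaTerm τ (v + t • (Pi.single j 1 : Fin g → ℂ)) n with hF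
  set w : (Fin g → ℤ) → ℝ := fun n =>
    C * Real.exp (∑ i, ((a + 2*Real.pi*((∑ k, |(v k).im|) + 1)) * |(n i : ℝ)|
      - Real.pi*c * (n i : ℝ)^2)) with hw
  have hwsum : Summable w := (summable_master g _ _ (by positivity)).mul_left C
  have hFd : ∀ n t₀, HasDerivAt (F n)
      (2*(Real.pi:ℂ)*Complex.I*(n j)
        * (Complex.exp (2*(Real.pi:ℂ)*Complex.I*(n j) * t₀) * (P n * riemannThetaTerm τ v n))) t₀ := by
    intro n t₀
    have heq : F n = fun t => Complex.exp (2*(Real.pi:ℂ)*Complex.I*(n j) * t)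
        * (P n * riemannThetaTerm τ v n) := by
      funext t
      rw [hF]; simp only []
      rw [riemannThetaTerm_shift]
      ring
    rw [heq]
    have h1 : HasDerivAt (fun t : ℂ => 2*(Real.pi:ℂ)*Complex.I*(n j) * t)
        (2*(Real.pi:ℂ)*Complex.I*(n j)) t₀ := by
      simpa using (hasDerivAt_id t₀).const_mul (2*(Real.pi:ℂ)*Complex.I*(n j))
    have h2 := h1.cexp.mul_const (P n * riemannThetaTerm τ v n)
    refine h2.congr_deriv ?_
    ring
  have hFdiff : ∀ n, DifferentiableOn ℂ (F n) (Metric.ball 0 1) :=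
    fun n t _ => ((hFd n t).differentiableAt).differentiableWithinAt
  have hFle : ∀ n, ∀ t ∈ Metric.ball (0:ℂ) 1, ‖F n t‖ ≤ w n := by
    intro n t ht
    exact key_bound τ c hc hq P C a hP v j n t
      (by simpa [dist_eq_norm] using (Metric.mem_ball.mp ht).le)
  have hmem : (0:ℂ) ∈ Metric.ball (0:ℂ) 1 := by simp
  have hsum := hasSum_deriv_of_summable_norm hwsum hFdiff Metric.isOpen_ball hFle hmem
  have hderivF : ∀ n, deriv (F n) 0
      = (2*(Real.pi:ℂ)*Complex.I*(n j) * P n) * riemannThetaTerm τ v n := by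
    intro n
    rw [(hFd n 0).deriv]
    simp
    ring
  rw [funext hderivF] at hsum
  have hdiff : DifferentiableOn ℂ (fun t => ∑' n, F n t) (Metric.ball 0 1) :=
    differentiableOn_tsum_of_summable_norm hwsum hFdiff Metric.isOpen_ball hFle
  have hda : DifferentiableAt ℂ (fun t => ∑' n, F n t) 0 :=
    hdiff.differentiableAt (Metric.isOpen_ball.mem_nhds hmem)
  have := hda.hasDerivAt
  rwa [← hsum.tsum_eq] at this
end Key

lemma riemannThetaTerm_tau_shift {g : ℕ} (τ A : Matrix (Fin g) (Fin g) ℂ)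
    (u : Fin g → ℂ) (n : Fin g → ℤ) (z : ℂ) :
    riemannThetaTerm (τ + z • A) u n
      = Complex.exp (((Real.pi:ℂ)*Complex.I * ∑ i, ∑ j, (n i:ℂ) * A i j * (n j:ℂ)) * z)
        * riemannThetaTerm τ u n := by
  rw [riemannThetaTerm, riemannThetaTerm, ← Complex.exp_add]
  congr 1
  have hsum : ∑ i, ∑ j, (n i : ℂ) * (τ + z • A) i j * (n j : ℂ)
      = (∑ i, ∑ j, (n i : ℂ) * τ i j * (n j : ℂ))
        + z * ∑ i, ∑ j, (n i : ℂ) * A i j * (n j : ℂ) := by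
    rw [Finset.mul_sum, ← Finset.sum_add_distrib]
    refine Finset.sum_congr rfl fun i _ => ?_
    rw [Finset.mul_sum, ← Finset.sum_add_distrib]
    refine Finset.sum_congr rfl fun j _ => ?_
    simp only [Matrix.add_apply, Matrix.smul_apply, smul_eq_mul]
    ring
  rw [hsum]
  ring

/-- Quadratic lower bound persists under small perturbation. -/
lemma quad_bound_perturb {g : ℕ} (τ A : Matrix (Fin g) (Fin g) ℂ) (c : ℝ)
    (hq : ∀ x : Fin g → ℝ, c * ∑ i, (x i)^2 ≤ ∑ i, ∑ j, x i * (τ i j).im * x j)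
    (hc : 0 < c) (z : ℂ) (hz : ∀ i j, |((z * A i j)).im| ≤ c/(2*((g:ℝ)+1)))
    (x : Fin g → ℝ) :
    (c/2) * ∑ i, (x i)^2 ≤ ∑ i, ∑ j, x i * ((τ + z • A) i j).im * x j := by
  have hsplit : ∑ i, ∑ j, x i * ((τ + z • A) i j).im * x j
      = (∑ i, ∑ j, x i * (τ i j).im * x j) + ∑ i, ∑ j, x i * (z * A i j).im * x j := by
    rw [← Finset.sum_add_distrib]
    refine Finset.sum_congr rfl fun i _ => ?_
    rw [← Finset.sum_add_distrib]
    refine Finset.sum_congr rfl fun j _ => ?_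
    simp only [Matrix.add_apply, Matrix.smul_apply, smul_eq_mul, Complex.add_im]
    ring
  set S := ∑ i, (x i)^2 with hS
  have hS0 : 0 ≤ S := Finset.sum_nonneg fun i _ => sq_nonneg _
  have hc' : 0 ≤ c := hc.le
  have hR : |∑ i, ∑ j, x i * (z * A i j).im * x j| ≤ (c/2) * S := by
    set δ : ℝ := c/(2*((g:ℝ)+1)) with hδ
    have hδ0 : 0 ≤ δ := by
      rw [hδ]; positivity
    have h1 : |∑ i, ∑ j, x i * (z * A i j).im * x j| ≤ ∑ i, ∑ j, |x i| * δ * |x j| := by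
      calc |∑ i, ∑ j, x i * (z * A i j).im * x j|
          ≤ ∑ i, |∑ j, x i * (z * A i j).im * x j| := Finset.abs_sum_le_sum_abs _ _
        _ ≤ ∑ i, ∑ j, |x i * (z * A i j).im * x j| :=
            Finset.sum_le_sum fun i _ => Finset.abs_sum_le_sum_abs _ _
        _ ≤ ∑ i, ∑ j, |x i| * δ * |x j| := by
            refine Finset.sum_le_sum fun i _ => Finset.sum_le_sum fun j _ => ?_
            rw [abs_mul, abs_mul]
            have hxj := abs_nonneg (x j)
            have hxi := abs_nonneg (x i)
            exact mul_le_mul_of_nonneg_right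
              (mul_le_mul_of_nonneg_left (hz i j) hxi) hxj
    have h2 : ∑ i, ∑ j, |x i| * δ * |x j| = δ * (∑ i, |x i|)^2 := by
      rw [sq]
      rw [Finset.sum_mul_sum]
      rw [Finset.mul_sum]
      refine Finset.sum_congr rfl fun i _ => ?_
      rw [Finset.mul_sum]
      refine Finset.sum_congr rfl fun j _ => by ring
    have h3 : (∑ i, |x i|)^2 ≤ (g:ℝ) * S := by
      have := sq_sum_le_card_mul_sum_sq (s := (Finset.univ : Finset (Fin g)))
        (f := fun i => |x i|)
      simpa [hS, _root_.sq_abs] using this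
    have h4 : δ * (∑ i, |x i|)^2 ≤ δ * ((g:ℝ) * S) := mul_le_mul_of_nonneg_left h3 hδ0
    have h5 : δ * ((g:ℝ) * S) ≤ (c/2) * S := by
      rw [hδ]
      rw [div_mul_eq_mul_div, div_mul_eq_mul_div, div_le_div_iff₀ (by positivity) (by norm_num)]
      have hg0 : (0:ℝ) ≤ (g:ℝ) := Nat.cast_nonneg g
      nlinarith [mul_nonneg hc' hS0]
    calc |∑ i, ∑ j, x i * (z * A i j).im * x j| ≤ δ * (∑ i, |x i|)^2 := h1.trans_eq h2
      _ ≤ (c/2) * S := h4.trans h5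
  have h6 := hq x
  have h7 := (abs_le.mp hR).1
  rw [hsplit]
  linarith

lemma hasDerivAt_theta_tau {g : ℕ} (τ A : Matrix (Fin g) (Fin g) ℂ) (u : Fin g → ℂ)
    (c : ℝ) (hc : 0 < c)
    (hq : ∀ x : Fin g → ℝ, c * ∑ i, (x i)^2 ≤ ∑ i, ∑ j, x i * (τ i j).im * x j)
    (r : ℝ) (hr : 0 < r)
    (hz : ∀ z : ℂ, ‖z‖ ≤ r → ∀ i j, |((z * A i j)).im| ≤ c/(2*((g:ℝ)+1))) :
    HasDerivAt (fun z : ℂ => ∑' n : Fin g → ℤ, riemannThetaTerm (τ + z • A) u n)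
      (∑' n : Fin g → ℤ,
        ((Real.pi:ℂ)*Complex.I * ∑ i, ∑ j, (n i:ℂ) * A i j * (n j:ℂ))
          * riemannThetaTerm τ u n) 0 := by
  set F : (Fin g → ℤ) → ℂ → ℂ := fun n z => riemannThetaTerm (τ + z • A) u n with hF
  set M : ℝ := ∑ k, |(u k).im| with hM
  set w : (Fin g → ℤ) → ℝ := fun n =>
    Real.exp (∑ i, (2*Real.pi*M * |(n i : ℝ)| - Real.pi*(c/2) * (n i : ℝ)^2)) with hw
  have hwsum : Summable w := summable_master g _ _ (by positivity)
  have hFd : ∀ n z₀, HasDerivAt (F n)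
      (((Real.pi:ℂ)*Complex.I * ∑ i, ∑ j, (n i:ℂ) * A i j * (n j:ℂ))
        * (Complex.exp (((Real.pi:ℂ)*Complex.I * ∑ i, ∑ j, (n i:ℂ) * A i j * (n j:ℂ)) * z₀)
          * riemannThetaTerm τ u n)) z₀ := by
    intro n z₀
    set Q : ℂ := (Real.pi:ℂ)*Complex.I * ∑ i, ∑ j, (n i:ℂ) * A i j * (n j:ℂ) with hQ
    have heq : F n = fun z => Complex.exp (Q * z) * riemannThetaTerm τ u n := by
      funext z
      rw [hF]
      exact riemannThetaTerm_tau_shift τ A u n z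
    rw [heq]
    have h1 : HasDerivAt (fun z : ℂ => Q * z) Q z₀ := by
      simpa using (hasDerivAt_id z₀).const_mul Q
    have h2 := h1.cexp.mul_const (riemannThetaTerm τ u n)
    refine h2.congr_deriv ?_
    ring
  have hFdiff : ∀ n, DifferentiableOn ℂ (F n) (Metric.ball 0 r) :=
    fun n z _ => ((hFd n z).differentiableAt).differentiableWithinAt
  have hFle : ∀ n, ∀ z ∈ Metric.ball (0:ℂ) r, ‖F n z‖ ≤ w n := by
    intro n z hzr
    have hzr' : ‖z‖ ≤ r := by simpa [dist_eq_norm] using (Metric.mem_ball.mp hzr).le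
    have hMu : ∀ i, |(u i).im| ≤ M :=
      fun i => Finset.single_le_sum (f := fun k => |(u k).im|)
        (fun k _ => abs_nonneg _) (Finset.mem_univ i)
    exact norm_riemannThetaTerm_le (τ + z • A) u n (c/2) M
      (quad_bound_perturb τ A c hq hc z (hz z hzr') (fun i => (n i : ℝ))) hMu
  have hmem : (0:ℂ) ∈ Metric.ball (0:ℂ) r := by simpa using hr
  have hsum := hasSum_deriv_of_summable_norm hwsum hFdiff Metric.isOpen_ball hFle hmem
  have hderivF : ∀ n, deriv (F n) 0
      = ((Real.pi:ℂ)*Complex.I * ∑ i, ∑ j, (n i:ℂ) * A i j * (n j:ℂ))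
        * riemannThetaTerm τ u n := by
    intro n
    rw [(hFd n 0).deriv]
    simp
  rw [funext hderivF] at hsum
  have hdiff : DifferentiableOn ℂ (fun z => ∑' n, F n z) (Metric.ball 0 r) :=
    differentiableOn_tsum_of_summable_norm hwsum hFdiff Metric.isOpen_ball hFle
  have hda : DifferentiableAt ℂ (fun z => ∑' n, F n z) 0 :=
    hdiff.differentiableAt (Metric.isOpen_ball.mem_nhds hmem)
  have := hda.hasDerivAt
  rwa [← hsum.tsum_eq] at this

lemma key_summable {g : ℕ} (τ : Matrix (Fin g) (Fin g) ℂ) (c : ℝ) (hc : 0 < c)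
    (hq : ∀ x : Fin g → ℝ, c * ∑ i, (x i)^2 ≤ ∑ i, ∑ j, x i * (τ i j).im * x j)
    (P : (Fin g → ℤ) → ℂ) (C a : ℝ)
    (hP : ∀ n, ‖P n‖ ≤ C * Real.exp (a * ∑ i, |(n i : ℝ)|))
    (v : Fin g → ℂ) (j : Fin g) :
    Summable (fun n : Fin g → ℤ => P n * riemannThetaTerm τ v n) := by
  apply Summable.of_norm_bounded ((summable_master g
      (a + 2*Real.pi*((∑ k, |(v k).im|) + 1)) (Real.pi*c) (by positivity)).mul_left C)
  intro n
  have h := key_bound τ c hc hq P C a hP v j n 0 (by simp)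
  simpa using h

lemma intAbs_le_exp_sum {g : ℕ} (j : Fin g) (n : Fin g → ℤ) :
    |(n j : ℝ)| ≤ Real.exp (∑ i, |(n i : ℝ)|) := by
  have h1 : |(n j : ℝ)| ≤ ∑ i, |(n i : ℝ)| :=
    Finset.single_le_sum (f := fun i => |(n i : ℝ)|) (fun i _ => abs_nonneg _)
      (Finset.mem_univ j)
  have h2 := Real.add_one_le_exp (∑ i, |(n i : ℝ)|)
  linarith

lemma norm_two_pi_I_int (m : ℤ) :
    ‖2*(Real.pi:ℂ)*Complex.I*(m:ℂ)‖ = 2*Real.pi*|(m:ℝ)| := by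
  rw [norm_mul, norm_mul, norm_mul]
  simp [Real.pi_nonneg, abs_of_nonneg]


/-- Heat equation for the Riemann theta function (directional form): for every
symmetric `A`, the map `s ↦ θ(u | τ + sA)` is differentiable at `s = 0` with
derivative `(1/(4πi)) Σ_{i,j} A_{ij} ∂²θ/∂u_i∂u_j (u|τ)`. -/
theorem riemannTheta_heat_equation (g : ℕ) (hg : 1 ≤ g)
    (τ : Matrix (Fin g) (Fin g) ℂ) (hsym : τ.IsSymm)
    (hpos : (Matrix.of fun i j => (τ i j).im).PosDef)
    (A : Matrix (Fin g) (Fin g) ℂ) (hA : A.IsSymm)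
    (u : Fin g → ℂ) :
    HasDerivAt (fun s : ℝ => riemannTheta (τ + (s : ℂ) • A) u)
      (1 / (4 * (Real.pi : ℂ) * Complex.I) *
        ∑ i, ∑ j, A i j *
          pderivAlong (fun v => pderivAlong (riemannTheta τ) j v) i u) 0 := by
  classical
  obtain ⟨c, hc, hq0⟩ := posdef_quad_bound hg (Matrix.of fun i j => (τ i j).im) hpos
  have hq : ∀ x : Fin g → ℝ, c * ∑ i, (x i)^2 ≤ ∑ i, ∑ j, x i * (τ i j).im * x j := by
    intro x; simpa using hq0 x
  set j0 : Fin g := ⟨0, hg⟩ with hj0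
  -- bounds for the polynomial factors
  have hP1 : ∀ n : Fin g → ℤ, ‖(1:ℂ)‖ ≤ 1 * Real.exp (0 * ∑ i, |(n i : ℝ)|) := by
    intro n; simp
  have hPj : ∀ (j : Fin g) (n : Fin g → ℤ),
      ‖2*(Real.pi:ℂ)*Complex.I*(n j) * 1‖
        ≤ (2*Real.pi) * Real.exp (1 * ∑ i, |(n i : ℝ)|) := by
    intro j n
    rw [mul_one, norm_two_pi_I_int, one_mul]
    exact mul_le_mul_of_nonneg_left (intAbs_le_exp_sum j n) (by positivity)
  have hPij : ∀ (i j : Fin g) (n : Fin g → ℤ),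
      ‖2*(Real.pi:ℂ)*Complex.I*(n i) * (2*(Real.pi:ℂ)*Complex.I*(n j) * 1)‖
        ≤ ((2*Real.pi)*(2*Real.pi)) * Real.exp (2 * ∑ i, |(n i : ℝ)|) := by
    intro i j n
    rw [mul_one, norm_mul, norm_two_pi_I_int, norm_two_pi_I_int]
    have hi := intAbs_le_exp_sum i n
    have hj := intAbs_le_exp_sum j n
    have h1 : |(n i:ℝ)| * |(n j:ℝ)|
        ≤ Real.exp (∑ k, |(n k : ℝ)|) * Real.exp (∑ k, |(n k : ℝ)|) :=
      mul_le_mul hi hj (abs_nonneg _) (Real.exp_pos _).le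
    calc 2*Real.pi*|(n i:ℝ)| * (2*Real.pi*|(n j:ℝ)|)
        = (2*Real.pi)*(2*Real.pi) * (|(n i:ℝ)| * |(n j:ℝ)|) := by ring
      _ ≤ (2*Real.pi)*(2*Real.pi)
          * (Real.exp (∑ k, |(n k : ℝ)|) * Real.exp (∑ k, |(n k : ℝ)|)) :=
          mul_le_mul_of_nonneg_left h1 (by positivity)
      _ = ((2*Real.pi)*(2*Real.pi)) * Real.exp (2 * ∑ i, |(n i : ℝ)|) := by
          rw [show (2:ℝ) * ∑ i, |(n i:ℝ)| = (∑ i, |(n i:ℝ)|) + ∑ i, |(n i:ℝ)| from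
            two_mul _, Real.exp_add]
  -- Step A1 : first u-derivative
  have hA1 : ∀ (j : Fin g) (v : Fin g → ℂ), pderivAlong (riemannTheta τ) j v
      = ∑' n : Fin g → ℤ, (2*(Real.pi:ℂ)*Complex.I*(n j) * 1)
          * riemannThetaTerm τ v n := by
    intro j v
    have h := key_hasDerivAt τ c hc hq (fun _ => (1:ℂ)) 1 0 hP1 v j
    rw [pderivAlong]
    have hfe : (fun t : ℂ => riemannTheta τ (v + t • (Pi.single j 1 : Fin g → ℂ)))
        = fun t : ℂ => ∑' n : Fin g → ℤ,
            (1:ℂ) * riemannThetaTerm τ (v + t • (Pi.single j 1 : Fin g → ℂ)) n := by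
      funext t; rw [riemannTheta]; simp
    rw [hfe]
    exact h.deriv
  -- Step A2 : second u-derivative
  have hA2 : ∀ i j : Fin g,
      pderivAlong (fun v => pderivAlong (riemannTheta τ) j v) i u
      = ∑' n : Fin g → ℤ,
          (2*(Real.pi:ℂ)*Complex.I*(n i) * (2*(Real.pi:ℂ)*Complex.I*(n j) * 1))
            * riemannThetaTerm τ u n := by
    intro i j
    have hfe' : (fun v => pderivAlong (riemannTheta τ) j v)
        = fun v => ∑' n : Fin g → ℤ, (2*(Real.pi:ℂ)*Complex.I*(n j) * 1)
            * riemannThetaTerm τ v n := by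
      funext v; exact hA1 j v
    clear hfe'
    rw [pderivAlong]
    simp only [hA1]
    have h := key_hasDerivAt τ c hc hq
      (fun n => 2*(Real.pi:ℂ)*Complex.I*(n j) * 1) (2*Real.pi) 1 (hPj j) u i
    exact h.deriv
  -- summability of the second-derivative series
  have hsumm2 : ∀ i j : Fin g, Summable (fun n : Fin g → ℤ =>
      (2*(Real.pi:ℂ)*Complex.I*(n i) * (2*(Real.pi:ℂ)*Complex.I*(n j) * 1))
        * riemannThetaTerm τ u n) :=
    fun i j => key_summable τ c hc hq _ ((2*Real.pi)*(2*Real.pi)) 2 (hPij i j) u j0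
  -- the τ-direction derivative
  set K : ℝ := ∑ i, ∑ j, ‖A i j‖ with hK
  have hK0 : 0 ≤ K := Finset.sum_nonneg fun i _ =>
    Finset.sum_nonneg fun j _ => norm_nonneg _
  set r : ℝ := min 1 (c/((2*((g:ℝ)+1))*(K+1))) with hr_def
  have hr : 0 < r := lt_min one_pos (by positivity)
  have hz : ∀ z : ℂ, ‖z‖ ≤ r → ∀ i j, |((z * A i j)).im| ≤ c/(2*((g:ℝ)+1)) := by
    intro z hzr i j
    have hAij : ‖A i j‖ ≤ K := by
      calc ‖A i j‖ ≤ ∑ j', ‖A i j'‖ :=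
            Finset.single_le_sum (f := fun j' => ‖A i j'‖)
              (fun k _ => norm_nonneg _) (Finset.mem_univ j)
        _ ≤ K := Finset.single_le_sum (f := fun i' => ∑ j', ‖A i' j'‖)
              (fun k _ => Finset.sum_nonneg fun _ _ => norm_nonneg _) (Finset.mem_univ i)
    have h1 : |(z * A i j).im| ≤ ‖z‖ * ‖A i j‖ := by
      calc |(z * A i j).im| ≤ ‖z * A i j‖ := Complex.abs_im_le_norm _
        _ = ‖z‖ * ‖A i j‖ := by rw [norm_mul]
    set X : ℝ := c/((2*((g:ℝ)+1))*(K+1)) with hX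
    have hX0 : 0 ≤ X := by positivity
    have hXK : X * (K+1) = c/(2*((g:ℝ)+1)) := by
      rw [hX]; field_simp
    calc |(z * A i j).im| ≤ ‖z‖ * ‖A i j‖ := h1
      _ ≤ r * K := mul_le_mul hzr hAij (norm_nonneg _) hr.le
      _ ≤ X * K := mul_le_mul_of_nonneg_right (min_le_right _ _) hK0
      _ ≤ X * (K+1) := by nlinarith
      _ = c/(2*((g:ℝ)+1)) := hXK
  have hmain := hasDerivAt_theta_tau τ A u c hc hq r hr hz
  have hmain' : HasDerivAt (fun z : ℂ => ∑' n : Fin g → ℤ, riemannThetaTerm (τ + z • A) u n)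
      (∑' n : Fin g → ℤ,
        ((Real.pi:ℂ)*Complex.I * ∑ i, ∑ j, (n i:ℂ) * A i j * (n j:ℂ))
          * riemannThetaTerm τ u n) ((0:ℝ):ℂ) := by
    simpa using hmain
  have hreal := hmain'.comp_ofReal
  -- identify the derivative with the claimed value
  have hswap : ∑ i, ∑ j, A i j * pderivAlong (fun v => pderivAlong (riemannTheta τ) j v) i u
      = ∑' n : Fin g → ℤ, ∑ i, ∑ j, A i j *
          ((2*(Real.pi:ℂ)*Complex.I*(n i) * (2*(Real.pi:ℂ)*Complex.I*(n j) * 1))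
            * riemannThetaTerm τ u n) := by
    rw [eq_comm, Summable.tsum_finsetSum (fun i _ => summable_sum fun j _ => (hsumm2 i j).mul_left (A i j))]
    refine Finset.sum_congr rfl fun i _ => ?_
    rw [Summable.tsum_finsetSum (fun j _ => (hsumm2 i j).mul_left (A i j))]
    refine Finset.sum_congr rfl fun j _ => ?_
    rw [tsum_mul_left, hA2 i j]
  have hper : ∀ n : Fin g → ℤ, (1 / (4*(Real.pi:ℂ)*Complex.I)) * ∑ i, ∑ j, A i j *
        ((2*(Real.pi:ℂ)*Complex.I*(n i) * (2*(Real.pi:ℂ)*Complex.I*(n j) * 1))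
          * riemannThetaTerm τ u n)
      = ((Real.pi:ℂ)*Complex.I * ∑ i, ∑ j, (n i:ℂ) * A i j * (n j:ℂ))
          * riemannThetaTerm τ u n := by
    intro n
    have hπ : (Real.pi:ℂ) ≠ 0 := Complex.ofReal_ne_zero.mpr Real.pi_ne_zero
    have hI := Complex.I_ne_zero
    simp only [Finset.mul_sum, Finset.sum_mul]
    refine Finset.sum_congr rfl fun i _ => Finset.sum_congr rfl fun j _ => ?_
    field_simp
    ring
  have hval : (∑' n : Fin g → ℤ,
        ((Real.pi:ℂ)*Complex.I * ∑ i, ∑ j, (n i:ℂ) * A i j * (n j:ℂ))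
          * riemannThetaTerm τ u n)
      = 1 / (4 * (Real.pi : ℂ) * Complex.I) *
        ∑ i, ∑ j, A i j *
          pderivAlong (fun v => pderivAlong (riemannTheta τ) j v) i u := by
    rw [hswap, ← tsum_mul_left]
    exact tsum_congr fun n => (hper n).symm
  rw [← hval]
  have hfe2 : (fun s : ℝ => riemannTheta (τ + (s:ℂ) • A) u)
      = fun s : ℝ => ∑' n : Fin g → ℤ, riemannThetaTerm (τ + (s:ℂ) • A) u n := by
    funext s; rw [riemannTheta]
  rw [hfe2]
  exact hreal
end
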